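/- (Normalization Lemma) Let (H,d_H) possess a stacked tiling with data (Γ, K, α, a, Γ′). Then every tile Q ∈ 𝒬 can be written as Q = g·(γ′·Q₀) for some g ∈ Γ_α and γ′ ∈ Γ′ such that g is a combinatorial isometry with respect to γ′·Q₀: for every tile Q′ ∈ 𝒬 with Q′ ∩ (γ′·Q₀) ≠ ∅, the image g·Q′ is again a tile of 𝒬. -/

import Mathlib

/-- A stacked tiling on a complete metric space `H` homeomorphic to `ℝⁿ`: a discrete
co-compact group `Γ` of isometries with compact connected fundamental domain `K`, and a
homothety `alpha` of factor `a > 1` normalizing `Γ`, such that `alpha K` is tiled by the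
translates of `K` under a finite set `Γ′ ⊆ Γ`. -/
structure StackedTiling (H : Type*) [MetricSpace H] where
  n : ℕ
  homeo : H ≃ₜ EuclideanSpace ℝ (Fin n)
  Γ : Subgroup (H ≃ᵢ H)
  K : Set H
  alpha : Equiv.Perm H
  a : ℝ
  ha : 1 < a
  halpha : ∀ x y : H, dist (alpha x) (alpha y) = a * dist x y
  properAction : ∀ L : Set H, IsCompact L →
    {γ : H ≃ᵢ H | γ ∈ Γ ∧ ((⇑γ '' L) ∩ L).Nonempty}.Finite
  hKcpt : IsCompact K
  hKconn : IsConnected K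
  hcover : (⋃ γ ∈ Γ, ⇑γ '' K) = Set.univ
  hdisjInt : ∀ γ ∈ Γ, γ ≠ 1 → interior K ∩ interior (⇑γ '' K) = ∅
  hconj : ∀ γ ∈ Γ, ∃ γ₁ ∈ Γ, ∀ x : H, alpha (γ x) = γ₁ (alpha x)
  Γ' : Finset (H ≃ᵢ H)
  hΓ'sub : ∀ γ' ∈ Γ', γ' ∈ Γ
  hstacked : ⇑alpha '' K = ⋃ γ' ∈ Γ', ⇑γ' '' K

/-- The action of the element `alphaᵐ·γ` of the semigroup `Γ_α` on `H × (0,∞)`: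
`(x,t) ↦ (alphaᵐ(γ x), aᵐ·t)`. -/
noncomputable def tileAct {H : Type*} [MetricSpace H] (T : StackedTiling H)
    (m : ℤ) (γ : H ≃ᵢ H) (p : H × ℝ) : H × ℝ :=
  ((T.alpha ^ m) (γ p.1), T.a ^ m * p.2)

/-- The fundamental tile `Q₀ = K × [1,a]`. -/
def fundTile {H : Type*} [MetricSpace H] (T : StackedTiling H) : Set (H × ℝ) :=
  T.K ×ˢ Set.Icc 1 T.a

/-- `Q` is a tile of `𝒬 = {g·Q₀ : g ∈ Γ_α}`. -/
def IsTile {H : Type*} [MetricSpace H] (T : StackedTiling H) (Q : Set (H × ℝ)) : Prop :=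
  ∃ m : ℤ, ∃ γ ∈ T.Γ, Q = tileAct T m γ '' fundTile T

section Aux

lemma isom_image_interior {H : Type*} [MetricSpace H] (γ : H ≃ᵢ H) (s : Set H) :
    interior (⇑γ '' s) = ⇑γ '' interior s :=
  (γ.toHomeomorph.image_interior s).symm


variable {H : Type*} [MetricSpace H]

/-- Interior of two distinct Γ-translates of `K` are disjoint. -/
lemma stacked_disjInt (T : StackedTiling H) {γ η : H ≃ᵢ H} (hγ : γ ∈ T.Γ) (hη : η ∈ T.Γ)
    (hne : γ ≠ η) : interior (⇑γ '' T.K) ∩ interior (⇑η '' T.K) = ∅ := by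
  have hmem : γ⁻¹ * η ∈ T.Γ := mul_mem (inv_mem hγ) hη
  have hne1 : γ⁻¹ * η ≠ 1 := by
    intro h
    exact hne (by rw [← inv_mul_cancel γ] at h; exact (mul_left_cancel h).symm)
  have h := T.hdisjInt _ hmem hne1
  ext x
  simp only [Set.mem_inter_iff, Set.mem_empty_iff_false, iff_false, not_and]
  intro h1 h2
  have hi1 : γ.symm x ∈ interior T.K := by
    rw [isom_image_interior] at h1
    obtain ⟨y, hy, hyx⟩ := h1
    rwa [show γ.symm x = y by rw [← hyx]; exact γ.symm_apply_apply y]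
  have hi2 : γ.symm x ∈ interior (⇑(γ⁻¹ * η) '' T.K) := by
    have himg : ⇑(γ⁻¹ * η) '' T.K = ⇑γ.symm '' (⇑η '' T.K) := by
      rw [Set.image_image]; rfl
    rw [himg, isom_image_interior]
    exact ⟨x, h2, rfl⟩
  have : γ.symm x ∈ interior T.K ∩ interior (⇑(γ⁻¹ * η) '' T.K) := ⟨hi1, hi2⟩
  rw [h] at this
  exact this

/-- Translates of `K` meeting a compact set form a finite family. -/
lemma stacked_finiteMeets (T : StackedTiling H) (L : Set H) (hL : IsCompact L) :
    {γ : H ≃ᵢ H | γ ∈ T.Γ ∧ ((⇑γ '' T.K) ∩ L).Nonempty}.Finite := by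
  apply (T.properAction (T.K ∪ L) (T.hKcpt.union hL)).subset
  rintro γ ⟨hγ, x, hx1, hx2⟩
  exact ⟨hγ, x, Set.image_mono Set.subset_union_left hx1, Set.subset_union_right hx2⟩

/-- `Γ` (as a set) is countable. -/
lemma stacked_countable (T : StackedTiling H) : (T.Γ : Set (H ≃ᵢ H)).Countable := by
  have hsub : (T.Γ : Set (H ≃ᵢ H)) ⊆ ⋃ n : ℕ,
      {γ : H ≃ᵢ H | γ ∈ T.Γ ∧ ((⇑γ '' T.K) ∩ (⇑T.homeo ⁻¹' Metric.closedBall 0 n)).Nonempty} := by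
    intro γ hγ
    obtain ⟨x, hx⟩ := T.hKconn.nonempty
    obtain ⟨n, hn⟩ := exists_nat_ge (dist (T.homeo (γ x)) 0)
    refine Set.mem_iUnion.2 ⟨n, hγ, γ x, ⟨x, hx, rfl⟩, ?_⟩
    simpa [Metric.mem_closedBall] using hn
  refine Set.Countable.mono hsub (Set.countable_iUnion fun n => ?_)
  exact (stacked_finiteMeets T _ (T.homeo.isCompact_preimage.2 (isCompact_closedBall 0 n))).countable

/-- `K` has nonempty interior. -/
lemma stacked_intK (T : StackedTiling H) [CompleteSpace H] : (interior T.K).Nonempty := by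
  have hKne : T.K.Nonempty := T.hKconn.nonempty
  have : Nonempty H := ⟨hKne.choose⟩
  have hcnt : Countable ↥(T.Γ : Set (H ≃ᵢ H)) := (stacked_countable T).to_subtype
  have hcov : ⋃ γ : ↥(T.Γ : Set (H ≃ᵢ H)), ⇑(γ : H ≃ᵢ H) '' T.K = Set.univ := by
    rw [Set.iUnion_coe_set]
    exact T.hcover
  obtain ⟨γ, hγ⟩ := nonempty_interior_of_iUnion_of_closed
    (fun γ : ↥(T.Γ : Set (H ≃ᵢ H)) => (T.hKcpt.image (γ : H ≃ᵢ H).continuous).isClosed) hcov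
  rw [isom_image_interior] at hγ
  exact hγ.of_image

lemma interior_union_empty {X : Type*} [TopologicalSpace X] {A B : Set X}
    (hA : IsClosed A) (hiA : interior A = ∅) (hiB : interior B = ∅) :
    interior (A ∪ B) = ∅ := by
  have key : interior (A ∪ B) ⊆ A := by
    intro x hx
    by_contra hxA
    have : x ∈ interior B := by
      rw [mem_interior]
      exact ⟨interior (A ∪ B) \ A, fun y hy => (interior_subset hy.1).resolve_left hy.2,
        isOpen_interior.sdiff hA, hx, hxA⟩
    simp [hiB] at this
  have : interior (A ∪ B) ⊆ interior A := interior_maximal key isOpen_interior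
  rw [hiA] at this
  exact Set.eq_empty_iff_forall_notMem.2 fun x hx => this hx

lemma interior_biUnion_empty {X : Type*} [TopologicalSpace X] {ι : Type*} {s : Set ι}
    (hs : s.Finite) {f : ι → Set X} (hc : ∀ i, IsClosed (f i)) (hi : ∀ i, interior (f i) = ∅) :
    interior (⋃ i ∈ s, f i) = ∅ := by
  refine Set.Finite.induction_on (motive := fun s _ => interior (⋃ i ∈ s, f i) = ∅) s hs (by simp)
    (fun {a s} _ _ ih => ?_)
  show interior (⋃ i ∈ insert a s, f i) = ∅
  rw [Set.biUnion_insert]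
  exact interior_union_empty (hc a) (hi a) ih

/-- Normalization: every Γ-translate of `K` can be written as `γ₂ (γ' K)` with
`γ' ∈ Γ'` and `γ₂` of the form `α δ α⁻¹` with `δ ∈ Γ`. -/
lemma stacked_normalize (T : StackedTiling H) [CompleteSpace H] {γ : H ≃ᵢ H} (hγ : γ ∈ T.Γ) :
    ∃ γ₂ ∈ T.Γ, ∃ δ ∈ T.Γ, (∀ x, T.alpha (δ x) = γ₂ (T.alpha x)) ∧
      ∃ γ' ∈ T.Γ', ⇑γ '' T.K = ⇑γ₂ '' (⇑γ' '' T.K) := by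
  by_contra hcon
  push_neg at hcon
  -- every point lies in a "good" translate
  have hgood : ∀ x : H, ∃ γ₂ ∈ T.Γ, (∃ δ ∈ T.Γ, ∀ y, T.alpha (δ y) = γ₂ (T.alpha y)) ∧
      ∃ γ' ∈ T.Γ', x ∈ ⇑γ₂ '' (⇑γ' '' T.K) := by
    intro x
    have hx : T.alpha.symm x ∈ ⋃ δ ∈ T.Γ, ⇑δ '' T.K := by rw [T.hcover]; trivial
    obtain ⟨δ, hδ, k, hk, hδk⟩ := by simpa using hx
    obtain ⟨γ₂, hγ₂, hc⟩ := T.hconj δ hδ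
    have hx2 : x = γ₂ (T.alpha k) := by
      rw [← hc, hδk, Equiv.apply_symm_apply]
    have hαk : T.alpha k ∈ ⋃ γ' ∈ T.Γ', ⇑γ' '' T.K := by
      rw [← T.hstacked]; exact ⟨k, hk, rfl⟩
    obtain ⟨γ', hγ', hk'⟩ := by simpa using hαk
    exact ⟨γ₂, hγ₂, ⟨δ, hδ, hc⟩, γ', hγ', ⟨T.alpha k, hk', hx2.symm⟩⟩
  -- finite family of translates meeting γK
  have hF : {η : H ≃ᵢ H | η ∈ T.Γ ∧ ((⇑η '' T.K) ∩ (⇑γ '' T.K)).Nonempty}.Finite :=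
    stacked_finiteMeets T _ (T.hKcpt.image γ.continuous)
  set F := {η : H ≃ᵢ H | η ∈ T.Γ ∧ ((⇑η '' T.K) ∩ (⇑γ '' T.K)).Nonempty}
  -- the open set U is contained in the union of the boundaries of members of F
  have hU : interior (⇑γ '' T.K) ⊆
      ⋃ η ∈ F, (⇑η '' T.K \ interior (⇑η '' T.K)) := by
    intro x hxU
    obtain ⟨γ₂, hγ₂, ⟨δ, hδ, hc⟩, γ', hγ', hxmem⟩ := hgood x
    set η : H ≃ᵢ H := γ₂ * γ' with hηdef
    have hηΓ : η ∈ T.Γ := mul_mem hγ₂ (T.hΓ'sub γ' hγ')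
    have himg : ⇑γ₂ '' (⇑γ' '' T.K) = ⇑η '' T.K := by
      rw [Set.image_image]; rfl
    have hxη : x ∈ ⇑η '' T.K := himg ▸ hxmem
    have hηF : η ∈ F := ⟨hηΓ, x, hxη, interior_subset hxU⟩
    have hneset : ⇑γ '' T.K ≠ ⇑η '' T.K := by
      intro h
      exact hcon γ₂ hγ₂ δ hδ hc γ' hγ' (h.trans himg.symm)
    have hneηγ : η ≠ γ := fun h => hneset (by rw [h])
    have hdisj := stacked_disjInt T hηΓ hγ hneηγ
    have hxnot : x ∉ interior (⇑η '' T.K) := by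
      intro hxi
      have : x ∈ interior (⇑η '' T.K) ∩ interior (⇑γ '' T.K) := ⟨hxi, hxU⟩
      rw [hdisj] at this
      exact this
    exact Set.mem_biUnion hηF ⟨hxη, hxnot⟩
  -- but that union has empty interior, while U is nonempty open
  have hiempty : interior (⋃ η ∈ F, (⇑η '' T.K \ interior (⇑η '' T.K))) = ∅ := by
    refine interior_biUnion_empty hF (fun η => ?_) (fun η => ?_)
    · exact ((T.hKcpt.image η.continuous).isClosed).sdiff isOpen_interior
    · refine Set.eq_empty_iff_forall_notMem.2 fun x hx => ?_
      have h1 : x ∈ ⇑η '' T.K \ interior (⇑η '' T.K) := interior_subset hx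
      have h2 : interior (⇑η '' T.K \ interior (⇑η '' T.K)) ⊆ interior (⇑η '' T.K) := by
        apply interior_mono
        exact Set.diff_subset
      exact h1.2 (h2 hx)
  have hUne : (interior (⇑γ '' T.K)).Nonempty := by
    have := stacked_intK T
    obtain ⟨y, hy⟩ := this
    refine ⟨γ y, ?_⟩
    rw [isom_image_interior]
    exact ⟨y, hy, rfl⟩
  have hsub2 : interior (⇑γ '' T.K) ⊆ interior (⋃ η ∈ F, (⇑η '' T.K \ interior (⇑η '' T.K))) :=
    interior_maximal hU isOpen_interior
  rw [hiempty] at hsub2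
  exact hUne.ne_empty (Set.eq_empty_iff_forall_notMem.2 fun x hx => hsub2 hx)

end Aux

section Main

variable {H : Type*} [MetricSpace H]

lemma tileAct_comp (T : StackedTiling H) (m m' : ℤ) (γ γ'' δ' : H ≃ᵢ H)
    (h : ∀ x : H, (T.alpha ^ m) (γ ((T.alpha ^ m') (γ'' x))) = (T.alpha ^ (m + m')) (δ' x))
    (s : Set (H × ℝ)) :
    tileAct T m γ '' (tileAct T m' γ'' '' s) = tileAct T (m + m') δ' '' s := by
  have ha0 : T.a ≠ 0 := ne_of_gt (lt_trans one_pos T.ha)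
  rw [← Set.image_comp]
  apply Set.image_congr'
  intro p
  show ((T.alpha ^ m) (γ ((T.alpha ^ m') (γ'' p.1))), T.a ^ m * (T.a ^ m' * p.2))
      = ((T.alpha ^ (m + m')) (δ' p.1), T.a ^ (m + m') * p.2)
  rw [h p.1, zpow_add₀ ha0, mul_assoc]

lemma tileAct_image_prod (T : StackedTiling H) (m : ℤ) (γ : H ≃ᵢ H) (s : Set H) (t : Set ℝ) :
    tileAct T m γ '' (s ×ˢ t)
      = ((fun x => (T.alpha ^ m) (γ x)) '' s) ×ˢ ((fun r => T.a ^ m * r) '' t) := by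
  rw [Set.prod_image_image_eq]
  rfl

end Main

/-- (Normalization Lemma) Every tile `Q ∈ 𝒬` can be written as `Q = g·(γ′·Q₀)` with
`g ∈ Γ_α` and `γ′ ∈ Γ′`, where `g` is a combinatorial isometry with respect to `γ′·Q₀`:
for every tile `Q′` meeting `γ′·Q₀`, the image `g·Q′` is again a tile. -/
theorem stmt_11 {H : Type*} [MetricSpace H] [CompleteSpace H] (T : StackedTiling H)
    (Q : Set (H × ℝ)) (hQ : IsTile T Q) :
    ∃ (m : ℤ) (γ : H ≃ᵢ H), γ ∈ T.Γ ∧ ∃ γ' ∈ T.Γ',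
      Q = tileAct T m γ '' (tileAct T 0 γ' '' fundTile T) ∧
      ∀ Q' : Set (H × ℝ), IsTile T Q' → (Q' ∩ (tileAct T 0 γ' '' fundTile T)).Nonempty →
        IsTile T (tileAct T m γ '' Q') := by
  obtain ⟨m, γ, hγ, hQdef⟩ := hQ
  obtain ⟨γ₂, hγ₂, δ, hδ, hconjδ, γ', hγ', hKeq⟩ := stacked_normalize T hγ
  obtain ⟨γ₃, hγ₃, hconj2⟩ := T.hconj γ₂ hγ₂
  have hapos : (0:ℝ) < T.a := lt_trans one_pos T.ha
  have ha0 : T.a ≠ 0 := ne_of_gt hapos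
  refine ⟨m, γ₂, hγ₂, γ', hγ', ?_, ?_⟩
  · -- Q = g (γ' Q₀)
    rw [hQdef]
    have hinner : tileAct T 0 γ' '' fundTile T = (⇑γ' '' T.K) ×ˢ (Set.Icc 1 T.a) := by
      rw [show fundTile T = T.K ×ˢ Set.Icc 1 T.a from rfl, tileAct_image_prod]
      congr 1
      all_goals simp
    rw [hinner, show fundTile T = T.K ×ˢ Set.Icc 1 T.a from rfl,
      tileAct_image_prod, tileAct_image_prod]
    congr 1
    rw [Set.image_image]
    have h1 : (fun x => (T.alpha ^ m) (γ x)) '' T.K = ⇑(T.alpha ^ m) '' (⇑γ '' T.K) :=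
      (Set.image_image _ _ _).symm
    rw [h1, hKeq, Set.image_image, Set.image_image]
  · rintro Q' ⟨m', γ'', hγ'', rfl⟩ hne
    -- determine the possible levels m' ∈ {-1, 0, 1}
    obtain ⟨p, ⟨q, hq, hpq⟩, ⟨r, hr, hpr⟩⟩ := hne
    have hq2 : q.2 ∈ Set.Icc 1 T.a := hq.2
    have hr2 : r.2 ∈ Set.Icc 1 T.a := hr.2
    have hpq2 : T.a ^ m' * q.2 = p.2 := congrArg Prod.snd hpq
    have hpr2 : T.a ^ (0:ℤ) * r.2 = p.2 := congrArg Prod.snd hpr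
    have heq : T.a ^ m' * q.2 = r.2 := by
      rw [hpq2, ← hpr2, zpow_zero, one_mul]
    have hz : (0:ℝ) < T.a ^ m' := zpow_pos hapos m'
    have hub : m' ≤ 1 := by
      have hle : T.a ^ m' ≤ T.a ^ (1:ℤ) := by
        rw [zpow_one]
        calc T.a ^ m' = T.a ^ m' * 1 := (mul_one _).symm
          _ ≤ T.a ^ m' * q.2 := by nlinarith [hq2.1]
          _ = r.2 := heq
          _ ≤ T.a := hr2.2
      exact (zpow_le_zpow_iff_right₀ T.ha).mp hle
    have hlb : -1 ≤ m' := by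
      have hge : T.a ^ (0:ℤ) ≤ T.a ^ (m' + 1) := by
        rw [zpow_zero, zpow_add_one₀ ha0]
        calc (1:ℝ) ≤ r.2 := hr2.1
          _ = T.a ^ m' * q.2 := heq.symm
          _ ≤ T.a ^ m' * T.a := by nlinarith [hq2.2]
      have := (zpow_le_zpow_iff_right₀ T.ha).mp hge
      omega
    have hcases : m' = -1 ∨ m' = 0 ∨ m' = 1 := by omega
    rcases hcases with rfl | rfl | rfl
    · -- level -1
      have key : ∀ z, γ₂ (T.alpha.symm z) = T.alpha.symm (γ₃ z) := by
        intro z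
        apply T.alpha.injective
        rw [hconj2, Equiv.apply_symm_apply, Equiv.apply_symm_apply]
      refine ⟨m + (-1), γ₃ * γ'', mul_mem hγ₃ hγ'', ?_⟩
      refine tileAct_comp T m (-1) γ₂ γ'' (γ₃ * γ'') (fun x => ?_) _
      rw [zpow_neg_one, show (T.alpha⁻¹) (γ'' x) = T.alpha.symm (γ'' x) from rfl, key,
        zpow_add, zpow_neg_one]
      rfl
    · -- level 0
      refine ⟨m + 0, γ₂ * γ'', mul_mem hγ₂ hγ'', ?_⟩
      refine tileAct_comp T m 0 γ₂ γ'' (γ₂ * γ'') (fun x => ?_) _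
      rw [add_zero, zpow_zero]
      rfl
    · -- level 1
      refine ⟨m + 1, δ * γ'', mul_mem hδ hγ'', ?_⟩
      refine tileAct_comp T m 1 γ₂ γ'' (δ * γ'') (fun x => ?_) _
      rw [zpow_one, ← hconjδ (γ'' x), zpow_add_one]
      rfl
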